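/- The determinant of the (p-1)×(p-1) integer circulant matrix T_p with first row the integer representatives (a₀,...,a_{p-2}) of powers of a primitive root g mod p is zero for every odd prime p ≥ 5. -/

import Mathlib

theorem stmt_18 (p : ℕ) [Fact p.Prime] (hp : 5 ≤ p)
    (g : ZMod p) (hg : orderOf g = p - 1)
    (T : Matrix (Fin (p - 1)) (Fin (p - 1)) ℤ)
    (hT : ∀ i j, T i j = ((g ^ ((j.val + (p - 1) - i.val) % (p - 1))).val : ℤ)) :
    T.det = 0 := by
  have hpp : p.Prime := Fact.out
  have hodd : Odd p := hpp.odd_of_ne_two (by omega)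
  obtain ⟨m, hm⟩ : ∃ m, p - 1 = 2 * m := by
    obtain ⟨k, hk⟩ := hodd; exact ⟨k, by omega⟩
  have hm2 : 2 ≤ m := by omega
  -- g^m = -1
  have hgm : g ^ m = -1 := by
    have h1 : g ^ m * g ^ m = 1 := by
      rw [← pow_add]
      have : m + m = p - 1 := by omega
      rw [this, ← hg, pow_orderOf_eq_one]
    rcases mul_self_eq_one_iff.mp h1 with h | h
    · exact absurd h (pow_ne_one_of_lt_orderOf (by omega) (by omega))
    · exact h
  have hg0 : g ≠ 0 := by
    intro h
    rw [h, zero_pow (by omega : m ≠ 0)] at hgm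
    exact one_ne_zero (neg_eq_zero.mp hgm.symm)
  -- key: rows i and i+m sum to the constant p
  have key : ∀ (i j : Fin (p - 1)) (h : i.val + m < p - 1),
      T i j + T ⟨i.val + m, h⟩ j = p := by
    intro i j h
    rw [hT, hT]
    set e1 := (j.val + (p - 1) - i.val) % (p - 1) with he1
    set e2 := (j.val + (p - 1) - (i.val + m)) % (p - 1) with he2
    have hx : g ^ e1 = - g ^ e2 := by
      have hmod : ∀ n : ℕ, g ^ (n % (p - 1)) = g ^ n := by
        intro n
        have : n % (p - 1) = n % orderOf g := by rw [hg]
        rw [this, pow_mod_orderOf]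
      have h1 : g ^ e1 = g ^ (j.val + (p - 1) - i.val) := by rw [he1, hmod]
      have h2 : g ^ e2 = g ^ (j.val + (p - 1) - (i.val + m)) := by rw [he2, hmod]
      have h3 : j.val + (p - 1) - i.val = (j.val + (p - 1) - (i.val + m)) + m := by
        omega
      rw [h1, h2, h3, pow_add, hgm, mul_neg_one]
    have hne : g ^ e2 ≠ 0 := pow_ne_zero _ hg0
    have hv : (g ^ e1).val = p - (g ^ e2).val := by
      rw [hx, ZMod.neg_val, if_neg hne]
    have hlt : (g ^ e2).val < p := ZMod.val_lt _
    rw [hv]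
    push_cast [Nat.cast_sub hlt.le]
    ring
  -- the dependent vector
  set i0 : Fin (p - 1) := ⟨0, by omega⟩
  set i1 : Fin (p - 1) := ⟨1, by omega⟩
  set i2 : Fin (p - 1) := ⟨m, by omega⟩
  set i3 : Fin (p - 1) := ⟨1 + m, by omega⟩
  have hvT : Matrix.vecMul ((Pi.single i0 1 + Pi.single i2 1) -
      (Pi.single i1 1 + Pi.single i3 1) : Fin (p - 1) → ℤ) T = 0 := by
    funext j
    have e0 := key i0 j (show 0 + m < p - 1 by omega)
    have e1 := key i1 j (show 1 + m < p - 1 by omega)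
    simp only [Matrix.sub_vecMul, Matrix.add_vecMul, Matrix.single_one_vecMul,
      Pi.sub_apply, Pi.add_apply, Pi.zero_apply, Matrix.row_apply]
    have hi2 : (⟨0 + m, show 0 + m < p - 1 by omega⟩ : Fin (p - 1)) = i2 :=
      Fin.ext (show 0 + m = m by omega)
    rw [hi2] at e0
    have hi3 : (⟨1 + m, show 1 + m < p - 1 by omega⟩ : Fin (p - 1)) = i3 :=
      Fin.ext (show 1 + m = 1 + m from rfl)
    rw [hi3] at e1
    omega
  by_contra hdet
  have hv0 := Matrix.eq_zero_of_vecMul_eq_zero hdet hvT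
  have h01 : i0 ≠ i1 := by
    intro h; have h' : (0 : ℕ) = 1 := congrArg Fin.val h; omega
  have h02 : i0 ≠ i2 := by
    intro h; have h' : (0 : ℕ) = m := congrArg Fin.val h; omega
  have h03 : i0 ≠ i3 := by
    intro h; have h' : (0 : ℕ) = 1 + m := congrArg Fin.val h; omega
  have := congrFun hv0 i0
  simp [Pi.single_apply, h01, h02, h03] at this
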